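/- Let m ∈ ℤ_{≥0} and 0 ≤ j ≤ 2m. The mock modular completion functions R^{[B]} satisfy R^{[B]}_{2m−j+1/2, m+1/2}(τ, v) = R^{[B]}_{j+1/2, m+1/2}(τ, −v) and R^{[B]}_{j+1/2, m+1/2}(τ+1, v) = e^{−πi(j+1/2)²/(2m+1)} R^{[B]}_{j+1/2, m+1/2}(τ, v). -/
import Mathlib


noncomputable section

open Complex

/-- Zwegers-type error function `E(x) = 2∫₀ˣ e^{−πu²} du`. -/
def Efun (x : ℝ) : ℝ := 2 * ∫ u in (0 : ℝ)..x, Real.exp (-Real.pi * u ^ 2)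

/-- The Zwegers-type function `R^{[B]}_{j+1/2, m+1/2}(τ,v)`: the sum over half-integers
`n ≡ j + 1/2 mod (2m+1)`, parametrized by `n = j + 1/2 + (2m+1)k`, `k ∈ ℤ`. -/
def RB (m : ℕ) (j : ℤ) (τ v : ℂ) : ℂ :=
  ∑' k : ℤ,
    (-1 : ℂ) ^ ((2 * (m : ℤ) + 1) * k) *
      (((Real.sign ((j : ℝ) + 1 / 2 + (2 * (m : ℝ) + 1) * (k : ℝ)) -
          Efun ((((j : ℝ) + 1 / 2 + (2 * (m : ℝ) + 1) * (k : ℝ)) +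
              (2 * (m : ℝ) + 1) * (v.im / τ.im)) *
            Real.sqrt (τ.im / ((m : ℝ) + 1 / 2)))) : ℝ) : ℂ) *
      Complex.exp (-(Real.pi : ℂ) * I * ((j : ℂ) + 1 / 2 + (2 * (m : ℂ) + 1) * (k : ℂ)) ^ 2 * τ /
          (2 * (m : ℂ) + 1) -
        2 * (Real.pi : ℂ) * I * ((j : ℂ) + 1 / 2 + (2 * (m : ℂ) + 1) * (k : ℂ)) * v)

lemma Efun_neg (x : ℝ) : Efun (-x) = -Efun x := by
  unfold Efun
  have h : (∫ u in (0:ℝ)..(-x), Real.exp (-Real.pi * u ^ 2)) =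
      -∫ u in (0:ℝ)..x, Real.exp (-Real.pi * u ^ 2) := by
    have := intervalIntegral.integral_comp_neg (a := (x:ℝ)) (b := 0)
      (fun u => Real.exp (-Real.pi * u ^ 2))
    simp only [neg_zero, neg_sq] at this
    rw [← this, intervalIntegral.integral_symm]
  rw [h]; ring

lemma neg_one_zpow_oddmul (M k : ℤ) (hM : Odd M) :
    (-1 : ℂ) ^ (M * (-k - 1)) = -(-1 : ℂ) ^ (M * k) := by
  rcases Int.even_or_odd k with hk | hk
  · have h1 : Even (M * k) := hk.mul_left M
    have h2 : Odd (M * (-k - 1)) := Int.odd_mul.mpr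
      ⟨hM, by rcases hk with ⟨t, ht⟩; exact ⟨-t - 1, by omega⟩⟩
    rw [h1.neg_one_zpow, h2.neg_one_zpow]
  · have h1 : Odd (M * k) := Int.odd_mul.mpr ⟨hM, hk⟩
    have h2 : Even (M * (-k - 1)) :=
      (show Even (-k - 1) by rcases hk with ⟨t, ht⟩; exact ⟨-t - 1, by omega⟩).mul_left M
    rw [h1.neg_one_zpow, h2.neg_one_zpow]; ring

/-- For `0 ≤ j ≤ 2m`: `R^{[B]}_{2m−j+1/2, m+1/2}(τ, v) = R^{[B]}_{j+1/2, m+1/2}(τ, −v)` and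
`R^{[B]}_{j+1/2, m+1/2}(τ+1, v) = e^{−πi(j+1/2)²/(2m+1)} R^{[B]}_{j+1/2, m+1/2}(τ, v)`. -/
theorem stmt17 (m : ℕ) (j : ℤ) (hj0 : 0 ≤ j) (hj1 : j ≤ 2 * (m : ℤ))
    (τ v : ℂ) (hτ : 0 < τ.im) :
    RB m (2 * (m : ℤ) - j) τ v = RB m j τ (-v) ∧
      RB m j (τ + 1) v =
        Complex.exp (-(Real.pi : ℂ) * I * ((j : ℂ) + 1 / 2) ^ 2 / (2 * (m : ℂ) + 1)) *
          RB m j τ v := by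
  constructor
  · -- reindex k ↦ -k-1
    unfold RB
    have e : ℤ ≃ ℤ := Equiv.trans (Equiv.neg ℤ) (Equiv.subRight 1)
    rw [← (Equiv.trans (Equiv.neg ℤ) (Equiv.subRight 1)).tsum_eq]
    refine tsum_congr fun k => ?_
    have hek : ((Equiv.trans (Equiv.neg ℤ) (Equiv.subRight 1)) k) = -k - 1 := rfl
    rw [hek]
    have hM : Odd (2 * (m : ℤ) + 1) := ⟨m, by ring⟩
    rw [neg_one_zpow_oddmul _ _ hM]
    have hr : ((2 * (m : ℤ) - j : ℤ) : ℝ) + 1 / 2 + (2 * (m : ℝ) + 1) * ((-k - 1 : ℤ) : ℝ) =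
        -((j : ℝ) + 1 / 2 + (2 * (m : ℝ) + 1) * (k : ℝ)) := by push_cast; ring
    have hc : ((2 * (m : ℤ) - j : ℤ) : ℂ) + 1 / 2 + (2 * (m : ℂ) + 1) * ((-k - 1 : ℤ) : ℂ) =
        -((j : ℂ) + 1 / 2 + (2 * (m : ℂ) + 1) * (k : ℂ)) := by push_cast; ring
    rw [hr, hc]
    rw [Real.sign_neg]
    have hE : (-((j : ℝ) + 1 / 2 + (2 * (m : ℝ) + 1) * (k : ℝ)) +
          (2 * (m : ℝ) + 1) * (v.im / τ.im)) * Real.sqrt (τ.im / ((m : ℝ) + 1 / 2)) =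
        -((((j : ℝ) + 1 / 2 + (2 * (m : ℝ) + 1) * (k : ℝ)) +
          (2 * (m : ℝ) + 1) * ((-v).im / τ.im)) * Real.sqrt (τ.im / ((m : ℝ) + 1 / 2))) := by
      simp only [Complex.neg_im]; ring
    rw [hE, Efun_neg]
    have hexp : -(Real.pi : ℂ) * I * (-((j : ℂ) + 1 / 2 + (2 * (m : ℂ) + 1) * (k : ℂ))) ^ 2 * τ /
          (2 * (m : ℂ) + 1) -
        2 * (Real.pi : ℂ) * I * (-((j : ℂ) + 1 / 2 + (2 * (m : ℂ) + 1) * (k : ℂ))) * v =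
        -(Real.pi : ℂ) * I * ((j : ℂ) + 1 / 2 + (2 * (m : ℂ) + 1) * (k : ℂ)) ^ 2 * τ /
          (2 * (m : ℂ) + 1) -
        2 * (Real.pi : ℂ) * I * ((j : ℂ) + 1 / 2 + (2 * (m : ℂ) + 1) * (k : ℂ)) * (-v) := by
      ring
    rw [hexp]
    push_cast
    ring
  · -- τ ↦ τ + 1
    unfold RB
    rw [← tsum_mul_left]
    refine tsum_congr fun k => ?_
    have him : (τ + 1).im = τ.im := by simp
    rw [him]
    obtain ⟨s, hs⟩ : Even (k * (k + 1)) := Int.even_mul_succ_self k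
    set t : ℤ := j * k + (m : ℤ) * k ^ 2 + s with ht
    have hM : (2 * (m : ℂ) + 1) ≠ 0 := by
      have h0 : ((2 * m + 1 : ℕ) : ℂ) ≠ 0 := Nat.cast_ne_zero.mpr (by omega)
      push_cast at h0
      exact h0
    have h2s : (s : ℂ) + (s : ℂ) = (k : ℂ) * ((k : ℂ) + 1) := by
      have := congrArg (fun z : ℤ => (z : ℂ)) hs
      push_cast at this
      linear_combination -this
    have hE : ((j : ℂ) + 1 / 2 + (2 * (m : ℂ) + 1) * (k : ℂ)) ^ 2 =
        ((j : ℂ) + 1 / 2) ^ 2 + (2 * (m : ℂ) + 1) * (2 * (t : ℂ)) := by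
      push_cast [ht]
      linear_combination (-(2 * (m : ℂ) + 1)) * h2s
    have hkey : -(Real.pi : ℂ) * I * ((j : ℂ) + 1 / 2 + (2 * (m : ℂ) + 1) * (k : ℂ)) ^ 2 *
          (τ + 1) / (2 * (m : ℂ) + 1) -
        2 * (Real.pi : ℂ) * I * ((j : ℂ) + 1 / 2 + (2 * (m : ℂ) + 1) * (k : ℂ)) * v =
        (-(Real.pi : ℂ) * I * ((j : ℂ) + 1 / 2) ^ 2 / (2 * (m : ℂ) + 1)) +
        (((-t : ℤ) : ℂ) * (2 * (Real.pi : ℂ) * I)) +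
        (-(Real.pi : ℂ) * I * ((j : ℂ) + 1 / 2 + (2 * (m : ℂ) + 1) * (k : ℂ)) ^ 2 * τ /
          (2 * (m : ℂ) + 1) -
        2 * (Real.pi : ℂ) * I * ((j : ℂ) + 1 / 2 + (2 * (m : ℂ) + 1) * (k : ℂ)) * v) := by
      rw [hE]
      push_cast
      field_simp
      ring
    rw [hkey, Complex.exp_add, Complex.exp_add]
    have h1 : Complex.exp (((-t : ℤ) : ℂ) * (2 * (Real.pi : ℂ) * I)) = 1 := by
      have := Complex.exp_int_mul_two_pi_mul_I (-t)
      simpa [mul_assoc] using this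
    rw [h1]
    ring
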